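/- Let (X,d) be a compact metric space and f : X → X a homeomorphism with the two-sided limit shadowing property with gap N for some N ∈ ℕ. Then f is chain-transitive. -/

import Mathlib

open Filter Topology

variable {X : Type*} [MetricSpace X]

/-- A two-sided limit pseudo-orbit: `d(f(x i), x (i+1)) → 0` as `|i| → ∞`. -/
def IsTwoSidedLimitPseudoOrbit (f : X ≃ X) (x : ℤ → X) : Prop :=
  Tendsto (fun i : ℤ => dist (f (x i)) (x (i + 1))) cofinite (𝓝 0)

/-- The sequence `x` is two-sided limit shadowed with gap `K`. -/
def TwoSidedLimitShadowedWithGap (f : X ≃ X) (x : ℤ → X) (K : ℤ) : Prop :=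
  ∃ y : X,
    Tendsto (fun i : ℤ => dist ((f ^ i) y) (x i)) atBot (𝓝 0) ∧
    Tendsto (fun i : ℤ => dist ((f ^ (K + i)) y) (x i)) atTop (𝓝 0)

/-- `f` has the two-sided limit shadowing property with gap `N`. -/
def TwoSidedLimitShadowingGapN (f : X ≃ X) (N : ℕ) : Prop :=
  ∀ x : ℤ → X, IsTwoSidedLimitPseudoOrbit f x →
    ∃ K : ℤ, |K| ≤ (N : ℤ) ∧ TwoSidedLimitShadowedWithGap f x K

/-- `g` is chain-transitive: for every `δ > 0` and `x, y` there is a finite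
`δ`-pseudo-orbit from `x` to `y`. -/
def ChainTransitive (g : X → X) : Prop :=
  ∀ δ : ℝ, 0 < δ → ∀ x y : X, ∃ n : ℕ, 0 < n ∧ ∃ z : ℕ → X,
    z 0 = x ∧ z n = y ∧ ∀ i < n, dist (g (z i)) (z (i + 1)) < δ

/-- The `i`-th power of the homeomorphism `f`, as a plain map. -/
private def FF (f : X ≃ₜ X) (i : ℤ) : X → X := ⇑(f.toEquiv ^ i)

private lemma FF_step (f : X ≃ₜ X) (i : ℤ) (u : X) :
    FF f (i + 1) u = f (FF f i u) := by
  have : f.toEquiv ^ (i + 1) = f.toEquiv * f.toEquiv ^ i := by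
    rw [add_comm, zpow_add, zpow_one]
  show (f.toEquiv ^ (i + 1)) u = f ((f.toEquiv ^ i) u)
  rw [this]
  rfl

private lemma FF_add (f : X ≃ₜ X) (i j : ℤ) (u : X) :
    FF f (i + j) u = FF f i (FF f j u) := by
  show (f.toEquiv ^ (i + j)) u = (f.toEquiv ^ i) ((f.toEquiv ^ j) u)
  rw [zpow_add]; rfl

private lemma FF_zero (f : X ≃ₜ X) (u : X) : FF f 0 u = u := rfl

private lemma FF_cont (f : X ≃ₜ X) (i : ℤ) : Continuous (FF f i) := by
  induction i using Int.induction_on with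
  | zero => exact continuous_id
  | succ n ih =>
      have h : FF f ((n : ℤ) + 1) = ⇑f ∘ FF f (n : ℤ) :=
        funext fun u => FF_step f n u
      rw [h]; exact f.continuous.comp ih
  | pred n ih =>
      have h : FF f (-(n : ℤ) - 1) = ⇑f.symm ∘ FF f (-(n : ℤ)) := by
        funext u
        have := FF_step f (-(n : ℤ) - 1) u
        rw [sub_add_cancel] at this
        show _ = f.symm (FF f (-(n : ℤ)) u)
        rw [this, Homeomorph.symm_apply_apply]
      rw [h]; exact f.symm.continuous.comp ih

private lemma FF_congr (f : X ≃ₜ X) {s t : ℤ} (u : X) (h : s = t) :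
    FF f s u = FF f t u := by rw [h]

/-- A homeomorphism of a compact metric space with the two-sided limit shadowing
property with gap `N` is chain-transitive. -/
theorem stmt2 [CompactSpace X] (f : X ≃ₜ X) (N : ℕ)
    (h : TwoSidedLimitShadowingGapN f.toEquiv N) :
    ChainTransitive ⇑f := by
  intro δ hδ x y
  have hδ2 : (0:ℝ) < δ / 2 := by linarith
  -- cluster point of the forward orbit of x
  obtain ⟨p, -, hp⟩ := isCompact_univ.exists_mapClusterPt
    (u := fun n : ℕ => FF f (n : ℤ) x) (f := atTop) (by simp)
  -- cluster point of the backward orbit of y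
  obtain ⟨q, -, hq⟩ := isCompact_univ.exists_mapClusterPt
    (u := fun n : ℕ => FF f (-(n : ℤ)) y) (f := atTop) (by simp)
  -- the two-sided limit pseudo-orbit
  set xs : ℤ → X := fun i => if i ≤ 0 then FF f i p else FF f i q with hxs
  have hpo : IsTwoSidedLimitPseudoOrbit f.toEquiv xs := by
    have hev : ∀ᶠ i in (cofinite : Filter ℤ),
        (0:ℝ) = dist (f.toEquiv (xs i)) (xs (i + 1)) := by
      rw [eventually_cofinite]
      refine Set.Finite.subset (Set.finite_singleton 0) ?_
      intro i hi
      simp only [Set.mem_setOf_eq] at hi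
      by_contra hne
      simp only [Set.mem_singleton_iff] at hne
      apply hi
      rcases lt_or_gt_of_ne hne with hlt | hgt
      · have h1 : xs i = FF f i p := by simp only [hxs]; rw [if_pos (by omega : i ≤ 0)]
        have h2 : xs (i + 1) = FF f (i + 1) p := by simp only [hxs]; rw [if_pos (by omega : i + 1 ≤ 0)]
        rw [h1, h2, FF_step]
        show (0:ℝ) = dist (f (FF f i p)) (f (FF f i p))
        rw [dist_self]
      · have h1 : xs i = FF f i q := by simp only [hxs]; rw [if_neg (by omega : ¬ i ≤ 0)]
        have h2 : xs (i + 1) = FF f (i + 1) q := by simp only [hxs]; rw [if_neg (by omega : ¬ i + 1 ≤ 0)]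
        rw [h1, h2, FF_step]
        show (0:ℝ) = dist (f (FF f i q)) (f (FF f i q))
        rw [dist_self]
    exact tendsto_const_nhds.congr' hev
  obtain ⟨K, hK, w, hneg, hpos⟩ := h xs hpo
  have hneg' : Tendsto (fun i : ℤ => dist (FF f i w) (xs i)) atBot (𝓝 0) := hneg
  have hpos' : Tendsto (fun i : ℤ => dist (FF f (K + i) w) (xs i)) atTop (𝓝 0) := hpos
  -- pick a far-negative time i₂
  obtain ⟨i₀, hi₀⟩ := eventually_atBot.mp (hneg'.eventually_lt_const hδ2)
  set i₂ : ℤ := min i₀ (-1) with hi₂def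
  have hi₂neg : i₂ ≤ -1 := min_le_right _ _
  have hi₂ : dist (FF f i₂ w) (xs i₂) < δ / 2 := hi₀ _ (min_le_left _ _)
  have hxsi₂ : xs i₂ = FF f i₂ p := by simp only [hxs]; rw [if_pos (by omega : i₂ ≤ 0)]
  rw [hxsi₂] at hi₂
  set m : ℕ := (-i₂).toNat with hmdef
  have hmZ : (m : ℤ) = -i₂ := Int.toNat_of_nonneg (by omega)
  -- pick a far-positive time n₁
  obtain ⟨n₀, hn₀⟩ := eventually_atTop.mp (hpos'.eventually_lt_const hδ2)
  set n₁ : ℤ := max n₀ ((N : ℤ) + 1) with hn₁def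
  have hn₁N : (N : ℤ) + 1 ≤ n₁ := le_max_right _ _
  have hKn₁ : 1 ≤ K + n₁ := by
    have := (abs_le.mp hK).1
    omega
  have e2 : dist (FF f (K + (n₁ + 1)) w) (xs (n₁ + 1)) < δ / 2 :=
    hn₀ _ (by omega : n₀ ≤ n₁ + 1)
  have hxsn₁ : xs (n₁ + 1) = FF f (n₁ + 1) q := by
    simp only [hxs]; rw [if_neg (by omega : ¬ n₁ + 1 ≤ 0)]
  rw [hxsn₁] at e2
  set c : ℕ := (K + n₁).toNat with hcdef
  have hcZ : (c : ℤ) = K + n₁ := Int.toNat_of_nonneg (by omega)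
  -- frequently, the forward orbit of x comes close to FF f i₂ p
  have hp2 : MapClusterPt (FF f i₂ p) atTop (fun n : ℕ => FF f (i₂ + (n : ℤ)) x) := by
    have h1 := MapClusterPt.continuousAt_comp (FF_cont f i₂).continuousAt hp
    have h2 : (FF f i₂ ∘ fun n : ℕ => FF f (n : ℤ) x)
        = fun n : ℕ => FF f (i₂ + (n : ℤ)) x :=
      funext fun n => (FF_add f i₂ n x).symm
    rwa [h2] at h1
  obtain ⟨n, hn1, hn2⟩ := ((mapClusterPt_iff_frequently.mp hp2 (Metric.ball (FF f i₂ p) (δ / 2))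
    (Metric.ball_mem_nhds _ hδ2)).and_eventually (eventually_ge_atTop (m + 1))).exists
  rw [Metric.mem_ball] at hn1
  set a : ℕ := n - m with hadef
  have haZ : (a : ℤ) = i₂ + (n : ℤ) := by omega
  have ha1 : 1 ≤ a := by omega
  -- frequently, the backward orbit of y comes close to FF f (n₁+1) q
  have hq2 : MapClusterPt (FF f (n₁ + 1) q) atTop
      (fun k : ℕ => FF f ((n₁ + 1) + (-(k : ℤ))) y) := by
    have h1 := MapClusterPt.continuousAt_comp (FF_cont f (n₁ + 1)).continuousAt hq
    have h2 : (FF f (n₁ + 1) ∘ fun k : ℕ => FF f (-(k : ℤ)) y)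
        = fun k : ℕ => FF f ((n₁ + 1) + (-(k : ℤ))) y :=
      funext fun k => (FF_add f (n₁ + 1) (-(k : ℤ)) y).symm
    rwa [h2] at h1
  obtain ⟨m₁, hm₁1, hm₁2⟩ := ((mapClusterPt_iff_frequently.mp hq2
    (Metric.ball (FF f (n₁ + 1) q) (δ / 2))
    (Metric.ball_mem_nhds _ hδ2)).and_eventually
    (eventually_ge_atTop ((n₁ + 2).toNat))).exists
  rw [Metric.mem_ball] at hm₁1
  have hm₁Z : n₁ + 2 ≤ (m₁ : ℤ) := by
    have := Int.toNat_le.mp hm₁2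
    omega
  set b : ℕ := ((m₁ : ℤ) - n₁ - 1).toNat with hbdef
  have hbZ : (b : ℤ) = (m₁ : ℤ) - n₁ - 1 := Int.toNat_of_nonneg (by omega)
  have hb1 : 1 ≤ b := by omega
  -- the two jumps
  have H1 : dist (FF f (a : ℤ) x) (FF f (-(m : ℤ)) w) < δ := by
    rw [FF_congr f x haZ, FF_congr f w (by omega : -(m:ℤ) = i₂)]
    calc dist (FF f (i₂ + (n:ℤ)) x) (FF f i₂ w)
        ≤ dist (FF f (i₂ + (n:ℤ)) x) (FF f i₂ p) + dist (FF f i₂ p) (FF f i₂ w) :=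
          dist_triangle _ _ _
      _ < δ / 2 + δ / 2 := by
          have := dist_comm (FF f i₂ w) (FF f i₂ p) ▸ hi₂
          exact add_lt_add hn1 this
      _ = δ := by ring
  have H2 : dist (FF f ((c : ℤ) + 1) w) (FF f (-(b : ℤ)) y) < δ := by
    rw [FF_congr f w (by omega : (c:ℤ) + 1 = K + (n₁ + 1)),
        FF_congr f y (by omega : -(b:ℤ) = (n₁ + 1) + (-(m₁:ℤ)))]
    calc dist (FF f (K + (n₁ + 1)) w) (FF f ((n₁ + 1) + (-(m₁:ℤ))) y)
        ≤ dist (FF f (K + (n₁ + 1)) w) (FF f (n₁ + 1) q)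
          + dist (FF f (n₁ + 1) q) (FF f ((n₁ + 1) + (-(m₁:ℤ))) y) := dist_triangle _ _ _
      _ < δ / 2 + δ / 2 := by
          have := dist_comm (FF f ((n₁ + 1) + (-(m₁:ℤ))) y) (FF f (n₁ + 1) q) ▸ hm₁1
          exact add_lt_add e2 this
      _ = δ := by ring
  -- the chain
  set L : ℕ := a + m + c + 1 + b with hLdef
  set z : ℕ → X := fun j =>
    if j < a then FF f (j : ℤ) x
    else if j ≤ a + m + c then FF f ((j : ℤ) - (a : ℤ) - (m : ℤ)) w
    else FF f ((j : ℤ) - (L : ℤ)) y with hz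
  refine ⟨L, by omega, z, ?_, ?_, ?_⟩
  · show (if 0 < a then FF f ((0:ℕ) : ℤ) x else _) = x
    rw [if_pos (by omega)]
    exact FF_zero f x
  · show (if L < a then _ else if L ≤ a + m + c then _ else FF f ((L:ℤ) - (L:ℤ)) y) = y
    rw [if_neg (by omega), if_neg (by omega), FF_congr f y (by omega : (L:ℤ) - (L:ℤ) = 0)]
    exact FF_zero f y
  · intro i hi
    have hstep : ∀ (t : ℤ) (u : X), f (FF f t u) = FF f (t + 1) u :=
      fun t u => (FF_step f t u).symm
    by_cases hA : i + 1 < a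
    · have hx1 : i < a := by omega
      show dist (f (if i < a then _ else _)) (if i + 1 < a then FF f ((i+1:ℕ) : ℤ) x else _) < δ
      rw [if_pos hx1, if_pos hA, hstep,
        FF_congr f x (by omega : (i:ℤ) + 1 = ((i+1:ℕ) : ℤ)), dist_self]
      exact hδ
    · by_cases hB : i + 1 = a
      · show dist (f (if i < a then _ else _))
          (if i + 1 < a then _ else if i + 1 ≤ a + m + c then
            FF f (((i+1:ℕ) : ℤ) - (a:ℤ) - (m:ℤ)) w else _) < δ
        rw [if_pos (by omega : i < a), if_neg (by omega), if_pos (by omega), hstep,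
          FF_congr f x (by omega : (i:ℤ) + 1 = (a:ℤ)),
          FF_congr f w (by omega : ((i+1:ℕ) : ℤ) - (a:ℤ) - (m:ℤ) = -(m:ℤ))]
        exact H1
      · by_cases hC : i + 1 ≤ a + m + c
        · show dist (f (if i < a then _ else if i ≤ a + m + c then
              FF f ((i:ℤ) - (a:ℤ) - (m:ℤ)) w else _))
            (if i + 1 < a then _ else if i + 1 ≤ a + m + c then
              FF f (((i+1:ℕ) : ℤ) - (a:ℤ) - (m:ℤ)) w else _) < δ
          rw [if_neg (by omega : ¬ i < a), if_pos (by omega), if_neg (by omega),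
            if_pos hC, hstep,
            FF_congr f w
              (by omega : (i:ℤ) - (a:ℤ) - (m:ℤ) + 1 = ((i+1:ℕ) : ℤ) - (a:ℤ) - (m:ℤ)),
            dist_self]
          exact hδ
        · by_cases hD : i = a + m + c
          · show dist (f (if i < a then _ else if i ≤ a + m + c then
                FF f ((i:ℤ) - (a:ℤ) - (m:ℤ)) w else _))
              (if i + 1 < a then _ else if i + 1 ≤ a + m + c then _ else
                FF f (((i+1:ℕ) : ℤ) - (L:ℤ)) y) < δ
            rw [if_neg (by omega : ¬ i < a), if_pos (by omega), if_neg (by omega),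
              if_neg (by omega), hstep,
              FF_congr f w (by omega : (i:ℤ) - (a:ℤ) - (m:ℤ) + 1 = (c:ℤ) + 1),
              FF_congr f y (by omega : ((i+1:ℕ) : ℤ) - (L:ℤ) = -(b:ℤ))]
            exact H2
          · show dist (f (if i < a then _ else if i ≤ a + m + c then _ else
                FF f ((i:ℤ) - (L:ℤ)) y))
              (if i + 1 < a then _ else if i + 1 ≤ a + m + c then _ else
                FF f (((i+1:ℕ) : ℤ) - (L:ℤ)) y) < δ
            rw [if_neg (by omega : ¬ i < a), if_neg (by omega), if_neg (by omega),
              if_neg (by omega), hstep,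
              FF_congr f y (by omega : (i:ℤ) - (L:ℤ) + 1 = ((i+1:ℕ) : ℤ) - (L:ℤ)),
              dist_self]
            exact hδ
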